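/- Let ρ be a stable relation on a finite set X such that every clasp in X is unlocked, let R be an associative ring with unity, let G be a semigroup, and let Φ : ρ → G be a homomorphism (so that I(X,ρ,R) carries the grading with homogeneous components S_a = {f : f(x,y) ≠ 0 ⇒ Φ(x,y) = a}). Then there exist a preorder ≤ on a finite set Y, a good G-grading of I(Y,≤,R) with components T_a, and an injective ring homomorphism h : I(X,ρ,R) → I(Y,≤,R) with h(S_a) ⊆ T_a for all a ∈ G. -/

import Mathlib

open scoped Classical

universe u v

/-- The interval `[x,y] = {z | x ρ z and z ρ y}` determined by a relation `ρ`. -/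
def RelInterval {X : Type*} (ρ : X → X → Prop) (x y : X) : Set X :=
  {z | ρ x z ∧ ρ z y}

/-- A relation is locally finite if every interval is finite. -/
def RelLocallyFinite {X : Type*} (ρ : X → X → Prop) : Prop :=
  ∀ x y, (RelInterval ρ x y).Finite

/-- A relation is balanced if it is reflexive and whenever
`w ρ x`, `x ρ y`, `y ρ z`, `w ρ z` all hold, `w ρ y ↔ x ρ z`. -/
def RelBalanced {X : Type*} (ρ : X → X → Prop) : Prop :=
  (∀ x, ρ x x) ∧
  ∀ w x y z, ρ w x → ρ x y → ρ y z → ρ w z → (ρ w y ↔ ρ x z)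

/-- The underlying set of the generalized incidence ring `I(X,ρ,R)`:
functions `f : X → X → R` with `f x y ≠ 0 → x ρ y`. -/
def IncFun {X : Type*} (ρ : X → X → Prop) (R : Type*) [Ring R] :
    Set (X → X → R) :=
  {f | ∀ x y, f x y ≠ 0 → ρ x y}

/-- The convolution product on `I(X,ρ,R)`. -/
noncomputable def conv {X R : Type*} [Ring R] (ρ : X → X → Prop)
    (f g : X → X → R) : X → X → R :=
  fun x y => if ρ x y then ∑ᶠ z ∈ RelInterval ρ x y, f x z * g z y else 0

/-- The function `e` with `e x x = 1` and `e x y = 0` for `x ≠ y`. -/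
noncomputable def eId (X R : Type*) [Ring R] : X → X → R :=
  fun x y => if x = y then 1 else 0

/-- The matrix unit `e_{xy}`: value `1` at `(x,y)` and `0` elsewhere. -/
noncomputable def eUnit {X : Type*} (R : Type*) [Ring R] (x y : X) : X → X → R :=
  fun i j => if i = x ∧ j = y then 1 else 0

/-- A homomorphism `Φ : ρ → G`: `Φ x y * Φ y z = Φ x z` on transitive triples. -/
def IsRelHom {X G : Type*} [Mul G] (ρ : X → X → Prop) (Φ : X → X → G) : Prop :=
  ∀ x y z, ρ x y → ρ y z → ρ x z → Φ x y * Φ y z = Φ x z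

/-- The homogeneous component `S_a` induced by `Φ`. -/
def gradeSet {X G : Type*} (R : Type*) [Ring R] (ρ : X → X → Prop)
    (Φ : X → X → G) (a : G) : Set (X → X → R) :=
  {f | (∀ x y, f x y ≠ 0 → ρ x y) ∧ ∀ x y, f x y ≠ 0 → Φ x y = a}

/-- The image `{Φ x y : x ρ y}` of a homomorphism `Φ : ρ → G`. -/
def RelImage {X G : Type*} (ρ : X → X → Prop) (Φ : X → X → G) : Set G :=
  {a | ∃ x y, ρ x y ∧ Φ x y = a}

/-- `θ : X₂ → X₁` is a compression map from `(X₂,ρ₂)` onto `(X₁,ρ₁)`. -/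
structure IsCompression {X₁ X₂ : Type*} (ρ₁ : X₁ → X₁ → Prop)
    (ρ₂ : X₂ → X₂ → Prop) (θ : X₂ → X₁) : Prop where
  surj : Function.Surjective θ
  mono : ∀ x y, ρ₂ x y → ρ₁ (θ x) (θ y)
  lift : ∀ a₁ a₂ a₃, ρ₁ a₁ a₂ → ρ₁ a₂ a₃ → ρ₁ a₁ a₃ →
    ∃ x₁ x₂ x₃, ρ₂ x₁ x₂ ∧ ρ₂ x₂ x₃ ∧ ρ₂ x₁ x₃ ∧
      θ x₁ = a₁ ∧ θ x₂ = a₂ ∧ θ x₃ = a₃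
  bij : Set.BijOn (fun p : X₂ × X₂ => (θ p.1, θ p.2))
    {p | ρ₂ p.1 p.2 ∧ p.1 ≠ p.2} {q | ρ₁ q.1 q.2 ∧ q.1 ≠ q.2}

/-- `σ ⊆ ρ` is a `G`-grading set for `ρ`: every function `φ : σ → G`
extends to a homomorphism `Φ : ρ → G` which is unique on `ρ`. -/
def IsGradingSet (G : Type*) [Mul G] {X : Type*} (ρ : X → X → Prop)
    (σ : Set (X × X)) : Prop :=
  (∀ p ∈ σ, ρ p.1 p.2) ∧
  ∀ φ : X × X → G, ∃ Φ : X → X → G,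
    IsRelHom ρ Φ ∧ (∀ p ∈ σ, Φ p.1 p.2 = φ p) ∧
    ∀ Ψ : X → X → G, IsRelHom ρ Ψ → (∀ p ∈ σ, Ψ p.1 p.2 = φ p) →
      ∀ x y, ρ x y → Ψ x y = Φ x y

/-- The map `h : I(X₁,ρ₁,R) → I(X₂,ρ₂,R)` induced by a compression `θ : X₂ → X₁`. -/
noncomputable def compressMap {X₁ X₂ : Type*} (R : Type*) [Ring R]
    (ρ₂ : X₂ → X₂ → Prop) (θ : X₂ → X₁) (f : X₁ → X₁ → R) : X₂ → X₂ → R :=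
  fun x y => if ρ₂ x y then f (θ x) (θ y) else 0

/-- A transitive triple: `a ρ b`, `b ρ c`, `a ρ c`. -/
def TransTriple {X : Type*} (ρ : X → X → Prop) (a b c : X) : Prop :=
  ρ a b ∧ ρ b c ∧ ρ a c

/-- A stable relation: balanced, and for all pairwise distinct `a,b,c,d`,
`a ρ b`, `a ρ c`, `b ρ c`, `b ρ d`, `c ρ d` imply `a ρ d`. -/
def RelStable {X : Type*} (ρ : X → X → Prop) : Prop :=
  RelBalanced ρ ∧
  ∀ a b c d : X, a ≠ b → a ≠ c → a ≠ d → b ≠ c → b ≠ d → c ≠ d →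
    ρ a b → ρ a c → ρ b c → ρ b d → ρ c d → ρ a d

/-- `x` is a clasp. -/
def IsClasp {X : Type*} (ρ : X → X → Prop) (x : X) : Prop :=
  ∃ w y, w ≠ x ∧ y ≠ x ∧ ρ w x ∧ ρ x y ∧ ¬ ρ w y

/-- `x` is a locked clasp. -/
def IsLockedClasp {X : Type*} (ρ : X → X → Prop) (x : X) : Prop :=
  ∃ u v w y : X, u ≠ x ∧ v ≠ x ∧ w ≠ x ∧ y ≠ x ∧ ¬ ρ w y ∧
    TransTriple ρ u x y ∧ TransTriple ρ u x v ∧ TransTriple ρ w x v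

/-- `A` is a cross-cut for the (pre)order `ρ` on `X`. -/
def IsCrossCut {X : Type*} (ρ : X → X → Prop) (A : Set X) : Prop :=
  (∀ a ∈ A, ∀ b ∈ A, a ≠ b → ¬ ρ a b ∧ ¬ ρ b a) ∧
  (∀ x : X, ∃ a ∈ A, ρ x a ∨ ρ a x) ∧
  (∀ C : Set X, IsChain ρ C → ∃ C', C ⊆ C' ∧ IsChain ρ C' ∧ (A ∩ C').Nonempty)


namespace StableAux
variable {X : Type u} {ρ : X → X → Prop}

theorem no_two_cycle (hst : RelStable ρ) {x w : X} (hx : IsClasp ρ x)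
    (h1 : ρ x w) (h2 : ρ w x) : w = x := by
  by_contra hwx
  obtain ⟨p, q, hpx, hqx, hpρ, hρq, hpq⟩ := hx
  have hrefl := hst.1.1
  have hbal := hst.1.2
  have hpw : ρ p w := (hbal p x w x hpρ h1 h2 hpρ).mpr (hrefl x)
  have hwq : ρ w q := (hbal x w x q h1 h2 hρq hρq).mp (hrefl x)
  have hwp : w ≠ p := by rintro rfl; exact hpq hwq
  have hwq' : w ≠ q := by rintro rfl; exact hpq hpw
  have hpq' : p ≠ q := by rintro rfl; exact hpq (hrefl p)
  exact hpq (hst.2 p x w q hpx (Ne.symm hwp) hpq' (fun h => hwx h.symm)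
    (Ne.symm hqx) hwq' hpρ hpw h1 hρq hwq)

/-- `E ρ x w y`: a strict transitive triple through `x`. -/
def E (ρ : X → X → Prop) (x w y : X) : Prop :=
  w ≠ x ∧ y ≠ x ∧ ρ w x ∧ ρ x y ∧ ρ w y

theorem N_eq (hst : RelStable ρ) {a b c : X} (hcl : IsClasp ρ a)
    (hab : a ≠ b) (hac : a ≠ c) (hbc : b ≠ c)
    (rab : ρ a b) (rbc : ρ b c) (rac : ρ a c) (w : X) :
    E ρ a w b ↔ E ρ a w c := by
  constructor
  · rintro ⟨hwa, _, rwa, -, rwb⟩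
    have hwb : w ≠ b := by
      rintro rfl; exact hab (no_two_cycle hst hcl rab rwa).symm
    have hwc : w ≠ c := by
      rintro rfl; exact hac (no_two_cycle hst hcl rac rwa).symm
    exact ⟨hwa, Ne.symm hac, rwa, rac,
      hst.2 w a b c hwa hwb hwc hab hac hbc rwa rwb rab rac rbc⟩
  · rintro ⟨hwa, _, rwa, -, rwc⟩
    exact ⟨hwa, Ne.symm hab, rwa, rab,
      (hst.1.2 w a b c rwa rab rbc rwc).mpr rac⟩

theorem M_eq (hst : RelStable ρ) {a b c : X} (hcl : IsClasp ρ c)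
    (hab : a ≠ b) (hac : a ≠ c) (hbc : b ≠ c)
    (rab : ρ a b) (rbc : ρ b c) (rac : ρ a c) (y : X) :
    E ρ c a y ↔ E ρ c b y := by
  constructor
  · rintro ⟨-, hyc, -, rcy, ray⟩
    exact ⟨hbc, hyc, rbc, rcy, (hst.1.2 a b c y rab rbc rcy ray).mp rac⟩
  · rintro ⟨-, hyc, -, rcy, rby⟩
    have hay : a ≠ y := by
      rintro rfl; exact hac (no_two_cycle hst hcl rcy rac)
    have hby : b ≠ y := by
      rintro rfl; exact hbc (no_two_cycle hst hcl rcy rbc)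
    exact ⟨hac, hyc, rac, rcy,
      hst.2 a b c y hab hac hay hbc hby (Ne.symm hyc) rab rac rbc rby rcy⟩

theorem unlocked_ext {b : X} (hcl : IsClasp ρ b) (hunl : ¬ IsLockedClasp ρ b)
    {a c w z : X} (h1 : E ρ b a c) (h2 : E ρ b w c) (h3 : E ρ b w z) :
    E ρ b a z := by
  obtain ⟨hab, hcb, rab, rbc, rac⟩ := h1
  obtain ⟨hwb, -, rwb, -, rwc⟩ := h2
  obtain ⟨-, hzb, -, rbz, rwz⟩ := h3
  refine ⟨hab, hzb, rab, rbz, ?_⟩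
  by_contra haz
  exact hunl ⟨w, c, a, z, hwb, hcb, hab, hzb, haz,
    ⟨rwb, rbz, rwz⟩, ⟨rwb, rbc, rwc⟩, ⟨rab, rbc, rac⟩⟩


section Construction

variable {n : ℕ} (ρ : X → X → Prop) (e : X ≃ Fin n)

/-- The carrier of the preorder: copies of points of `X`. -/
def YT : Type := {p : Fin n × (Set (Fin n) × Bool) //
  IsClasp ρ (e.symm p.1) ∨ p.2 = (∅, false)}

instance : Finite (YT ρ e) := by
  unfold YT; infer_instance

noncomputable def srcSet (a b : X) : Set (Fin n) × Bool :=
  if ∃ w, E ρ a w b then ({i | ∃ w, E ρ a w b ∧ E ρ a w (e.symm i)}, false)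
  else (∅, true)

noncomputable def src (a b : X) : YT ρ e :=
  ⟨(e a, if IsClasp ρ a then srcSet ρ e a b else (∅, false)), by
    by_cases h : IsClasp ρ a
    · exact Or.inl (by simpa using h)
    · exact Or.inr (by simp [h])⟩

noncomputable def tgt (a b : X) : YT ρ e :=
  ⟨(e b, if IsClasp ρ b then ({i | E ρ b a (e.symm i)}, false) else (∅, false)), by
    by_cases h : IsClasp ρ b
    · exact Or.inl (by simpa using h)
    · exact Or.inr (by simp [h])⟩

/-- The canonical copy. -/
def diag (a : X) : YT ρ e := ⟨(e a, (∅, false)), Or.inr rfl⟩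

def lle (p q : YT ρ e) : Prop :=
  p = q ∨ ∃ a b : X, a ≠ b ∧ ρ a b ∧ p = src ρ e a b ∧ q = tgt ρ e a b

def th (p : YT ρ e) : X := e.symm p.val.1

@[simp] theorem th_src (a b : X) : th ρ e (src ρ e a b) = a := by
  simp [th, src]

@[simp] theorem th_tgt (a b : X) : th ρ e (tgt ρ e a b) = b := by
  simp [th, tgt]

@[simp] theorem th_diag (a : X) : th ρ e (diag ρ e a) = a := by
  simp [th, diag]

theorem lle_refl (p : YT ρ e) : lle ρ e p p := Or.inl rfl

theorem th_surj : Function.Surjective (th ρ e) :=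
  fun a => ⟨diag ρ e a, th_diag ρ e a⟩

variable {ρ e}

theorem src_base_eq {a b : X} {p : YT ρ e} (h : p = src ρ e a b) : a = th ρ e p := by
  rw [h, th_src]

theorem tgt_base_eq {a b : X} {p : YT ρ e} (h : p = tgt ρ e a b) : b = th ρ e p := by
  rw [h, th_tgt]

theorem lle_strict {p q : YT ρ e} (h : lle ρ e p q) (hne : p ≠ q) :
    th ρ e p ≠ th ρ e q ∧ ρ (th ρ e p) (th ρ e q) ∧
      p = src ρ e (th ρ e p) (th ρ e q) ∧ q = tgt ρ e (th ρ e p) (th ρ e q) := by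
  rcases h with h | ⟨a, b, hab, rab, hp, hq⟩
  · exact absurd h hne
  · obtain rfl := src_base_eq hp
    obtain rfl := tgt_base_eq hq
    exact ⟨hab, rab, hp, hq⟩

theorem lle_mono (hρ : ∀ x, ρ x x) {p q : YT ρ e} (h : lle ρ e p q) :
    ρ (th ρ e p) (th ρ e q) := by
  by_cases hne : p = q
  · rw [hne]; exact hρ _
  · exact (lle_strict h hne).2.1

/-- Source copies agree along transitive triples. -/
theorem src_eq (hst : RelStable ρ) {a b c : X}
    (hab : a ≠ b) (hac : a ≠ c) (hbc : b ≠ c)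
    (rab : ρ a b) (rbc : ρ b c) (rac : ρ a c) :
    src ρ e a b = src ρ e a c := by
  by_cases h : IsClasp ρ a
  · have hN := N_eq hst h hab hac hbc rab rbc rac
    have h1 : (∃ w, E ρ a w b) ↔ (∃ w, E ρ a w c) := exists_congr hN
    have h2 : {i : Fin n | ∃ w, E ρ a w b ∧ E ρ a w (e.symm i)} =
        {i : Fin n | ∃ w, E ρ a w c ∧ E ρ a w (e.symm i)} := by
      ext i
      exact exists_congr fun w => and_congr_left fun _ => hN w
    apply Subtype.ext
    simp only [src, srcSet, h, if_true, h1, h2]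
  · apply Subtype.ext; simp [src, h]

/-- Target copies agree along transitive triples. -/
theorem tgt_eq (hst : RelStable ρ) {a b c : X}
    (hab : a ≠ b) (hac : a ≠ c) (hbc : b ≠ c)
    (rab : ρ a b) (rbc : ρ b c) (rac : ρ a c) :
    tgt ρ e a c = tgt ρ e b c := by
  by_cases h : IsClasp ρ c
  · have hM := M_eq hst h hab hac hbc rab rbc rac
    have h2 : {i : Fin n | E ρ c a (e.symm i)} = {i : Fin n | E ρ c b (e.symm i)} := by
      ext i; exact hM _
    apply Subtype.ext
    simp only [tgt, h, if_true, h2]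
  · apply Subtype.ext; simp [tgt, h]

/-- The middle copy: target from the left equals source to the right. -/
theorem tgt_src_mid (hst : RelStable ρ)
    (hclasp : ∀ x : X, IsClasp ρ x → ¬ IsLockedClasp ρ x) {a b c : X}
    (hab : a ≠ b) (hbc : b ≠ c) (rab : ρ a b) (rbc : ρ b c) (rac : ρ a c) :
    tgt ρ e a b = src ρ e b c := by
  by_cases h : IsClasp ρ b
  · have hE : E ρ b a c := ⟨hab, Ne.symm hbc, rab, rbc, rac⟩
    have hNne : ∃ w, E ρ b w c := ⟨a, hE⟩
    have h2 : {i : Fin n | E ρ b a (e.symm i)} =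
        {i : Fin n | ∃ w, E ρ b w c ∧ E ρ b w (e.symm i)} := by
      ext i
      constructor
      · intro hi; exact ⟨a, hE, hi⟩
      · rintro ⟨w, hw1, hw2⟩
        exact unlocked_ext h (hclasp b h) hE hw1 hw2
    apply Subtype.ext
    simp only [tgt, src, srcSet, h, if_true, hNne, h2]
  · apply Subtype.ext; simp [tgt, src, h]

/-- Converse to the middle-copy lemma: a matching middle copy forces `ρ a c`. -/
theorem mid_rho {a b c : X}
    (hab : a ≠ b) (hbc : b ≠ c) (rab : ρ a b) (rbc : ρ b c)
    (heq : tgt ρ e a b = src ρ e b c) : ρ a c := by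
  by_cases h : IsClasp ρ b
  · have hval := congrArg (fun p : YT ρ e => p.val.2) heq
    simp only [tgt, src, h, if_true] at hval
    by_cases hN : ∃ w, E ρ b w c
    · rw [srcSet, if_pos hN] at hval
      have hsets : {i : Fin n | E ρ b a (e.symm i)} =
          {i : Fin n | ∃ w, E ρ b w c ∧ E ρ b w (e.symm i)} :=
        congrArg Prod.fst hval
      obtain ⟨w, hw⟩ := hN
      have hc : (e c) ∈ {i : Fin n | ∃ w, E ρ b w c ∧ E ρ b w (e.symm i)} :=
        ⟨w, hw, by simpa using hw⟩
      rw [← hsets] at hc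
      have : E ρ b a c := by simpa using hc
      exact this.2.2.2.2
    · rw [srcSet, if_neg hN] at hval
      exact absurd (congrArg Prod.snd hval) (by simp)
  · by_contra hnac
    exact h ⟨a, c, hab, Ne.symm hbc, rab, rbc, hnac⟩


/-- A copy of a non-clasp element is the canonical copy. -/
theorem eq_diag_of_not_clasp {p : YT ρ e} (h : ¬ IsClasp ρ (th ρ e p)) :
    p = diag ρ e (th ρ e p) := by
  obtain ⟨⟨i, s⟩, hval⟩ := p
  rcases hval with hval | hval
  · exact absurd hval h
  · apply Subtype.ext
    simp only [diag]
    exact Prod.ext (by simp [th]) hval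

theorem src_eq_diag {a b : X} (h : ¬ IsClasp ρ a) : src ρ e a b = diag ρ e a := by
  apply Subtype.ext; simp [src, diag, h]

theorem tgt_eq_diag {a b : X} (h : ¬ IsClasp ρ b) : tgt ρ e a b = diag ρ e b := by
  apply Subtype.ext; simp [tgt, diag, h]

theorem lle_trans (hst : RelStable ρ)
    (hclasp : ∀ x : X, IsClasp ρ x → ¬ IsLockedClasp ρ x) {p q r : YT ρ e}
    (h1 : lle ρ e p q) (h2 : lle ρ e q r) : lle ρ e p r := by
  rcases h1 with rfl | ⟨a, b, hab, rab, hp, hq⟩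
  · exact h2
  rcases h2 with rfl | ⟨b', c, hbc', rbc', hq', hr⟩
  · exact Or.inr ⟨a, b, hab, rab, hp, hq⟩
  have hbb : b = b' := (tgt_base_eq hq).trans (src_base_eq hq').symm
  subst hbb
  have rac : ρ a c := mid_rho hab hbc' rab rbc' (hq ▸ hq')
  by_cases hac : a = c
  · subst hac
    have hca : ¬ IsClasp ρ a := fun hcl => hab (no_two_cycle hst hcl rab rbc').symm
    have hcb : ¬ IsClasp ρ b := fun hcl => hab (no_two_cycle hst hcl rbc' rab)
    have hpr : p = r := by
      rw [hp, hr, src_eq_diag hca, tgt_eq_diag hca]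
    exact Or.inl hpr
  · refine Or.inr ⟨a, c, hac, rac, ?_, ?_⟩
    · rw [hp]; exact src_eq hst hab hac hbc' rab rbc' rac
    · rw [hr]; exact (tgt_eq hst hab hac hbc' rab rbc' rac).symm


/-- Copies above a fixed copy are determined by their base point. -/
theorem lle_inj {p m m' : YT ρ e} (h1 : lle ρ e p m) (h2 : lle ρ e p m')
    (hth : th ρ e m = th ρ e m') : m = m' := by
  rcases eq_or_ne p m with rfl | hne1
  · rcases eq_or_ne p m' with rfl | hne2
    · rfl
    · exact absurd (hth ▸ ((lle_strict h2 hne2).1)) (fun h => h rfl)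
  · have s1 := lle_strict h1 hne1
    rcases eq_or_ne p m' with rfl | hne2
    · exact absurd (hth ▸ s1.1) (fun h => h rfl)
    · have s2 := lle_strict h2 hne2
      rw [s1.2.2.2, s2.2.2.2, hth]

/-- θ restricts to a bijection between intervals. -/
theorem interval_bijOn (hst : RelStable ρ)
    (hclasp : ∀ x : X, IsClasp ρ x → ¬ IsLockedClasp ρ x) {p q : YT ρ e}
    (hpq : lle ρ e p q) :
    Set.BijOn (th ρ e) {m | lle ρ e p m ∧ lle ρ e m q}
      {b | ρ (th ρ e p) b ∧ ρ b (th ρ e q)} := by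
  have hrefl := hst.1.1
  refine ⟨?_, ?_, ?_⟩
  · rintro m ⟨h1, h2⟩
    exact ⟨lle_mono hrefl h1, lle_mono hrefl h2⟩
  · rintro m ⟨h1, -⟩ m' ⟨h1', -⟩ hth
    exact lle_inj h1 h1' hth
  · rintro b ⟨rab, rbc⟩
    set a := th ρ e p with ha
    set c := th ρ e q with hc
    rcases eq_or_ne p q with rfl | hne
    · -- interval over a reflexive pair
      rcases eq_or_ne b a with rfl | hba
      · exact ⟨p, ⟨lle_refl ρ e p, lle_refl ρ e p⟩, rfl⟩
      · -- b ≠ a, ρ a b, ρ b a; neither a nor b is a clasp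
        have hca : ¬ IsClasp ρ a := fun hcl => hba (no_two_cycle hst hcl rab rbc)
        have hcb : ¬ IsClasp ρ b := fun hcl => hba ((no_two_cycle hst hcl rbc rab).symm)
        have hpd : p = diag ρ e a := eq_diag_of_not_clasp (ha ▸ hca)
        refine ⟨tgt ρ e a b, ⟨Or.inr ⟨a, b, Ne.symm hba, rab, ?_, rfl⟩,
          Or.inr ⟨b, a, hba, rbc, ?_, ?_⟩⟩, th_tgt ρ e a b⟩
        · rw [hpd, src_eq_diag hca]
        · rw [tgt_eq_diag hcb, src_eq_diag hcb]
        · rw [hpd, tgt_eq_diag hca]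
    · have s := lle_strict hpq hne
      rcases eq_or_ne b a with rfl | hba
      · exact ⟨p, ⟨lle_refl ρ e p, hpq⟩, rfl⟩
      rcases eq_or_ne b c with rfl | hbc
      · exact ⟨q, ⟨hpq, lle_refl ρ e q⟩, rfl⟩
      have hab : a ≠ b := Ne.symm hba
      refine ⟨tgt ρ e a b, ⟨Or.inr ⟨a, b, hab, rab, ?_, rfl⟩,
        Or.inr ⟨b, c, hbc, rbc, ?_, ?_⟩⟩, th_tgt ρ e a b⟩
      · rw [s.2.2.1]
        exact (src_eq hst hab s.1 hbc rab rbc s.2.1).symm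
      · exact tgt_src_mid hst hclasp hab hbc rab rbc s.2.1
      · rw [s.2.2.2]
        exact tgt_eq hst hab s.1 hbc rab rbc s.2.1


theorem lift_triple (hst : RelStable ρ)
    (hclasp : ∀ x : X, IsClasp ρ x → ¬ IsLockedClasp ρ x) {a₁ a₂ a₃ : X}
    (r12 : ρ a₁ a₂) (r23 : ρ a₂ a₃) (r13 : ρ a₁ a₃) :
    ∃ x₁ x₂ x₃ : YT ρ e, lle ρ e x₁ x₂ ∧ lle ρ e x₂ x₃ ∧ lle ρ e x₁ x₃ ∧
      th ρ e x₁ = a₁ ∧ th ρ e x₂ = a₂ ∧ th ρ e x₃ = a₃ := by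
  rcases eq_or_ne a₁ a₂ with rfl | h12
  · rcases eq_or_ne a₁ a₃ with rfl | h13
    · exact ⟨diag ρ e a₁, diag ρ e a₁, diag ρ e a₁, lle_refl ρ e _, lle_refl ρ e _,
        lle_refl ρ e _, th_diag ρ e _, th_diag ρ e _, th_diag ρ e _⟩
    · exact ⟨src ρ e a₁ a₃, src ρ e a₁ a₃, tgt ρ e a₁ a₃, lle_refl ρ e _,
        Or.inr ⟨a₁, a₃, h13, r13, rfl, rfl⟩, Or.inr ⟨a₁, a₃, h13, r13, rfl, rfl⟩,
        th_src ρ e _ _, th_src ρ e _ _, th_tgt ρ e _ _⟩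
  rcases eq_or_ne a₂ a₃ with rfl | h23
  · exact ⟨src ρ e a₁ a₂, tgt ρ e a₁ a₂, tgt ρ e a₁ a₂,
      Or.inr ⟨a₁, a₂, h12, r12, rfl, rfl⟩, lle_refl ρ e _,
      Or.inr ⟨a₁, a₂, h12, r12, rfl, rfl⟩,
      th_src ρ e _ _, th_tgt ρ e _ _, th_tgt ρ e _ _⟩
  rcases eq_or_ne a₁ a₃ with rfl | h13
  · -- a 2-cycle: a₁ ρ a₂ ρ a₁, so neither is a clasp
    have hc1 : ¬ IsClasp ρ a₁ := fun hcl => h12 (no_two_cycle hst hcl r12 r23).symm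
    have hc2 : ¬ IsClasp ρ a₂ := fun hcl => h12 (no_two_cycle hst hcl r23 r12)
    refine ⟨src ρ e a₁ a₂, tgt ρ e a₁ a₂, tgt ρ e a₂ a₁,
      Or.inr ⟨a₁, a₂, h12, r12, rfl, rfl⟩,
      Or.inr ⟨a₂, a₁, h23, r23, ?_, rfl⟩, ?_,
      th_src ρ e _ _, th_tgt ρ e _ _, th_tgt ρ e _ _⟩
    · rw [tgt_eq_diag hc2, src_eq_diag hc2]
    · rw [src_eq_diag hc1, tgt_eq_diag hc1]
      exact lle_refl ρ e _
  · refine ⟨src ρ e a₁ a₂, tgt ρ e a₁ a₂, tgt ρ e a₂ a₃,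
      Or.inr ⟨a₁, a₂, h12, r12, rfl, rfl⟩,
      Or.inr ⟨a₂, a₃, h23, r23, ?_, rfl⟩,
      Or.inr ⟨a₁, a₃, h13, r13, ?_, ?_⟩,
      th_src ρ e _ _, th_tgt ρ e _ _, th_tgt ρ e _ _⟩
    · exact tgt_src_mid hst hclasp h12 h23 r12 r23 r13
    · exact src_eq hst h12 h13 h23 r12 r23 r13
    · exact (tgt_eq hst h12 h13 h23 r12 r23 r13).symm

theorem strict_bijOn :
    Set.BijOn (fun pq : YT ρ e × YT ρ e => (th ρ e pq.1, th ρ e pq.2))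
      {pq | lle ρ e pq.1 pq.2 ∧ pq.1 ≠ pq.2} {q : X × X | ρ q.1 q.2 ∧ q.1 ≠ q.2} := by
  refine ⟨?_, ?_, ?_⟩
  · rintro ⟨p, q⟩ ⟨h, hne⟩
    have s := lle_strict h hne
    exact ⟨s.2.1, s.1⟩
  · rintro ⟨p, q⟩ ⟨h, hne⟩ ⟨p', q'⟩ ⟨h', hne'⟩ heq
    have s := lle_strict h hne
    have s' := lle_strict h' hne'
    simp only at s s' heq
    have h1 : th ρ e p = th ρ e p' := congrArg Prod.fst heq
    have h2 : th ρ e q = th ρ e q' := congrArg Prod.snd heq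
    have e1 : p = p' := by rw [s.2.2.1, s'.2.2.1, h1, h2]
    have e2 : q = q' := by rw [s.2.2.2, s'.2.2.2, h1, h2]
    exact Prod.ext e1 e2
  · rintro ⟨a, b⟩ ⟨rab, hab⟩
    refine ⟨(src ρ e a b, tgt ρ e a b), ⟨Or.inr ⟨a, b, hab, rab, rfl, rfl⟩, ?_⟩, ?_⟩
    · intro h
      have : a = b := by
        have := congrArg (th ρ e) h
        simpa using this
      exact hab this
    · simp

end Construction

section Grading

variable {Y : Type} [Finite Y] {G : Type*} [Semigroup G] {R : Type*} [Ring R]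
variable (le : Y → Y → Prop) (Ψ : Y → Y → G)

/-- The homogeneous component determined by `Ψ`. -/
def Tgrade (a : G) : AddSubgroup (Y → Y → R) where
  carrier := {f | ∀ p q, f p q ≠ 0 → le p q ∧ Ψ p q = a}
  zero_mem' := by intro p q hh; simp at hh
  add_mem' := by
    intro f g hf hg p q hh
    by_cases hfp : f p q = 0
    · exact hg p q (by simpa [hfp] using hh)
    · exact hf p q hfp
  neg_mem' := by
    intro f hf p q hh
    exact hf p q (by simpa using hh)

theorem Tgrade_subset (a : G) : ((Tgrade le Ψ a : AddSubgroup (Y → Y → R)) : Set (Y → Y → R)) ⊆ IncFun le R :=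
  fun f hf x y hxy => (hf x y hxy).1

theorem Tgrade_decompose (f : Y → Y → R) (hf : f ∈ IncFun le R) :
    ∃! s : G →₀ (Y → Y → R),
      (∀ a, s a ∈ Tgrade le Ψ a) ∧ (s.sum fun _ v => v) = f := by
  classical
  haveI : Fintype Y := Fintype.ofFinite Y
  set part : G → (Y → Y → R) := fun a p q => if Ψ p q = a then f p q else 0 with hpart
  set supp : Finset G :=
    ((Finset.univ : Finset (Y × Y)).filter fun pq => f pq.1 pq.2 ≠ 0).image
      fun pq => Ψ pq.1 pq.2 with hsupp
  have hmem : ∀ a, a ∈ supp ↔ part a ≠ 0 := by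
    intro a
    constructor
    · intro ha h0
      obtain ⟨pq, hpq, hψ⟩ := Finset.mem_image.mp ha
      have hne := (Finset.mem_filter.mp hpq).2
      have := congrFun (congrFun h0 pq.1) pq.2
      rw [hpart] at this
      simp only [hψ, if_pos rfl] at this
      exact hne (by simpa using this)
    · intro h0
      have : ∃ p q, part a p q ≠ 0 := by
        by_contra hall
        push_neg at hall
        exact h0 (funext fun p => funext fun q => hall p q)
      obtain ⟨p, q, hpq⟩ := this
      have hcond : Ψ p q = a ∧ f p q ≠ 0 := by
        by_cases hc : Ψ p q = a
        · exact ⟨hc, by simpa [hpart, hc] using hpq⟩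
        · exact absurd (by simp [hpart, hc]) hpq
      exact Finset.mem_image.mpr ⟨(p, q), Finset.mem_filter.mpr ⟨Finset.mem_univ _, hcond.2⟩,
        hcond.1⟩
  refine ⟨⟨supp, part, hmem⟩, ⟨?_, ?_⟩, ?_⟩
  · intro a p q hpq
    have hc : Ψ p q = a := by
      by_cases hc : Ψ p q = a
      · exact hc
      · exact absurd (by simp [hpart, hc]) hpq
    have hfpq : f p q ≠ 0 := by simpa [hpart, hc] using hpq
    exact ⟨hf p q hfpq, hc⟩
  · funext p q
    have hev : (Finsupp.sum ⟨supp, part, hmem⟩ fun _ v => v) p q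
        = ∑ a ∈ supp, part a p q := by
      rw [Finsupp.sum]
      simp [Finset.sum_apply]
    rw [hev]
    by_cases hfpq : f p q = 0
    · simp [hpart, hfpq]
    · have : ∑ a ∈ supp, part a p q
          = if Ψ p q ∈ supp then f p q else 0 := by
        rw [hpart]
        exact Finset.sum_ite_eq supp (Ψ p q) fun _ => f p q
      rw [this, if_pos]
      exact Finset.mem_image.mpr ⟨(p, q),
        Finset.mem_filter.mpr ⟨Finset.mem_univ _, hfpq⟩, rfl⟩
  · rintro s ⟨hs, hsum⟩
    apply Finsupp.ext
    intro a
    show s a = part a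
    funext p q
    by_cases hc : Ψ p q = a
    · have hfv : f p q = ∑ b ∈ s.support, s b p q := by
        rw [← hsum, Finsupp.sum]
        simp [Finset.sum_apply]
      have : ∑ b ∈ s.support, s b p q = s a p q := by
        apply Finset.sum_eq_single a
        · intro b _ hb
          by_contra hne
          exact hb ((hs b p q hne).2.symm.trans hc)
        · intro ha
          rw [Finsupp.notMem_support_iff.mp ha]
          rfl
      rw [hpart]
      simp only [if_pos hc]
      rw [hfv, this]
    · have h1 : s a p q = 0 := by
        by_contra hne
        exact hc (hs a p q hne).2
      rw [h1, hpart]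
      simp [hc]

theorem Tgrade_mul (hΨ : ∀ p q r, le p q → le q r → le p r → Ψ p q * Ψ q r = Ψ p r)
    (a b : G) (f : Y → Y → R) (hfa : f ∈ Tgrade le Ψ a)
    (g : Y → Y → R) (hgb : g ∈ Tgrade le Ψ b) :
    conv le f g ∈ Tgrade le Ψ (a * b) := by
  intro p q hpq
  rw [conv] at hpq
  by_cases hle : le p q
  · rw [if_pos hle] at hpq
    obtain ⟨m, hm, hterm⟩ := exists_ne_zero_of_finsum_mem_ne_zero hpq
    have hfm : f p m ≠ 0 := left_ne_zero_of_mul hterm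
    have hgm : g m q ≠ 0 := right_ne_zero_of_mul hterm
    obtain ⟨hpm, hΨa⟩ := hfa p m hfm
    obtain ⟨hmq, hΨb⟩ := hgb m q hgm
    exact ⟨hle, by rw [← hΨ p m q hpm hmq hle, hΨa, hΨb]⟩
  · exact absurd (if_neg hle) hpq

end Grading

end StableAux
/-- for a stable relation with all clasps unlocked on a finite
set `X` and a grading of `I(X,ρ,R)` induced by a homomorphism `Φ : ρ → G`,
there is a preorder `≤` on a finite set `Y`, a good `G`-grading of `I(Y,≤,R)`
with components `T_a`, and an injective ring homomorphism
`h : I(X,ρ,R) → I(Y,≤,R)` with `h(S_a) ⊆ T_a` for all `a`. -/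
theorem stable_graded_embeds_in_preorder_incidence {X : Type*} (R : Type*)
    [Ring R] [Finite X] {G : Type*} [Semigroup G] (ρ : X → X → Prop)
    (hstable : RelStable ρ)
    (hclasp : ∀ x : X, IsClasp ρ x → ¬ IsLockedClasp ρ x)
    (Φ : X → X → G) (hΦ : IsRelHom ρ Φ) :
    ∃ (Y : Type) (le : Y → Y → Prop) (θ : Y → X)
      (T : G → AddSubgroup (Y → Y → R))
      (h : (X → X → R) → (Y → Y → R)),
      Finite Y ∧
      (∀ y, le y y) ∧ (∀ a b c, le a b → le b c → le a c) ∧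
      IsCompression ρ le θ ∧
      (∀ a : G, (T a : Set (Y → Y → R)) ⊆ IncFun le R) ∧
      (∀ f ∈ IncFun le R, ∃! s : G →₀ (Y → Y → R),
          (∀ a, s a ∈ T a) ∧ (s.sum fun _ v => v) = f) ∧
      (∀ a b : G, ∀ f ∈ T a, ∀ g ∈ T b, conv le f g ∈ T (a * b)) ∧
      (∀ x y, le x y → ∃ a : G, eUnit R x y ∈ T a) ∧
      (∀ f ∈ IncFun ρ R, h f ∈ IncFun le R) ∧
      (∀ f ∈ IncFun ρ R, ∀ g ∈ IncFun ρ R, h (f + g) = h f + h g) ∧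
      (∀ f ∈ IncFun ρ R, ∀ g ∈ IncFun ρ R, h (conv ρ f g) = conv le (h f) (h g)) ∧
      h (eId X R) = eId Y R ∧
      Set.InjOn h (IncFun ρ R) ∧
      (∀ a : G, ∀ f ∈ gradeSet R ρ Φ a, h f ∈ T a) := by
  classical
  obtain ⟨n, ⟨e⟩⟩ := Finite.exists_equiv_fin X
  have hrefl := hstable.1.1
  open StableAux in
  refine ⟨StableAux.YT ρ e, StableAux.lle ρ e, StableAux.th ρ e,
    fun a => StableAux.Tgrade (StableAux.lle ρ e)
      (fun p q => Φ (StableAux.th ρ e p) (StableAux.th ρ e q)) a,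
    compressMap R (StableAux.lle ρ e) (StableAux.th ρ e),
    ?_, ?_, ?_, ?_, ?_, ?_, ?_, ?_, ?_, ?_, ?_, ?_, ?_, ?_⟩
  · infer_instance
  · exact StableAux.lle_refl ρ e
  · exact fun a b c h1 h2 => StableAux.lle_trans hstable hclasp h1 h2
  · exact ⟨StableAux.th_surj ρ e, fun x y hh => StableAux.lle_mono hrefl hh,
      fun a b c h1 h2 h3 => StableAux.lift_triple hstable hclasp h1 h2 h3,
      StableAux.strict_bijOn⟩
  · exact fun a => StableAux.Tgrade_subset _ _ a
  · exact fun f hf => StableAux.Tgrade_decompose _ _ f hf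
  · refine fun a b f hfa g hgb => StableAux.Tgrade_mul _ _ ?_ a b f hfa g hgb
    exact fun p q r h1 h2 h3 => hΦ _ _ _ (StableAux.lle_mono hrefl h1)
      (StableAux.lle_mono hrefl h2) (StableAux.lle_mono hrefl h3)
  · refine fun x y hxy => ⟨Φ (StableAux.th ρ e x) (StableAux.th ρ e y),
      fun p q hpq => ?_⟩
    rw [eUnit] at hpq
    by_cases hc : p = x ∧ q = y
    · obtain ⟨rfl, rfl⟩ := hc
      exact ⟨hxy, rfl⟩
    · exact absurd (if_neg hc) hpq
  · intro f _ p q hpq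
    simp only [compressMap] at hpq
    by_cases hle : StableAux.lle ρ e p q
    · exact hle
    · exact absurd (if_neg hle) hpq
  · intro f _ g _
    funext p q
    by_cases hle : StableAux.lle ρ e p q <;>
      simp [compressMap, hle]
  · intro f _ g _
    funext p q
    by_cases hle : StableAux.lle ρ e p q
    · simp only [compressMap, conv, if_pos hle,
        if_pos (StableAux.lle_mono hrefl hle)]
      refine (finsum_mem_eq_of_bijOn (StableAux.th ρ e)
        (StableAux.interval_bijOn hstable hclasp hle) ?_).symm
      rintro m ⟨h1, h2⟩
      simp only [if_pos h1, if_pos h2]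
    · simp [compressMap, conv, hle]
  · funext p q
    by_cases hpq : p = q
    · subst hpq
      simp [compressMap, StableAux.lle_refl ρ e p, eId]
    · have h2 : eId (StableAux.YT ρ e) R p q = 0 := by simp [eId, hpq]
      rw [h2]
      simp only [compressMap]
      by_cases hle : StableAux.lle ρ e p q
      · rw [if_pos hle]
        have hne := (StableAux.lle_strict hle hpq).1
        simp [eId, hne]
      · rw [if_neg hle]
  · intro f hf g hg hfg
    funext x y
    by_cases r : ρ x y
    · rcases eq_or_ne x y with rfl | hxy
      · have hc := congrFun (congrFun hfg (StableAux.diag ρ e x)) (StableAux.diag ρ e x)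
        simpa [compressMap, StableAux.lle_refl, StableAux.th_diag] using hc
      · have hc := congrFun (congrFun hfg (StableAux.src ρ e x y)) (StableAux.tgt ρ e x y)
        have hle : StableAux.lle ρ e (StableAux.src ρ e x y) (StableAux.tgt ρ e x y) :=
          Or.inr ⟨x, y, hxy, r, rfl, rfl⟩
        simpa [compressMap, hle] using hc
    · have h1 : f x y = 0 := by by_contra hh; exact r (hf x y hh)
      have h2 : g x y = 0 := by by_contra hh; exact r (hg x y hh)
      rw [h1, h2]
  · intro a f hf p q hpq
    simp only [compressMap] at hpq
    by_cases hle : StableAux.lle ρ e p q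
    · rw [if_pos hle] at hpq
      exact ⟨hle, hf.2 _ _ hpq⟩
    · exact absurd (if_neg hle) hpq
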